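/- Let C be the light cone {y ∈ R^{d+1} : y_0 ≥ 0, y_0² ≥ y_1² + ... + y_d²} (the cone over the unit ball B^d). Then for every y in the interior of C, vol_{d+1}({x ∈ C : ⟨x,y⟩ ≤ 1}) = β_d / ((d+1) ‖y‖_{1,d}^{d+1}), where β_d is the volume of the d-dimensional unit ball and ‖y‖_{1,d} = √(y_0² - y_1² - ... - y_d²). -/

import Mathlib

open scoped RealInnerProductSpace
open MeasureTheory Matrix

namespace LightCone

variable {d : ℕ}

noncomputable def ss (a : ℝ) (w : Fin d → ℝ) : ℝ := Real.sqrt (a ^ 2 - ∑ i, w i ^ 2)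

noncomputable def cc (a : ℝ) (w : Fin d → ℝ) : ℝ := 1 / (ss a w * (a + ss a w))

/-- Lorentz boost matrix sending `y = (a, w)` to `(s, 0)`. -/
noncomputable def bmat (a : ℝ) (w : Fin d → ℝ) : Matrix (Fin (d + 1)) (Fin (d + 1)) ℝ :=
  Matrix.of (Fin.cons (Fin.cons (a / ss a w) (fun j => -(w j) / ss a w))
    (fun i => Fin.cons (-(w i) / ss a w)
      (fun j => (if i = j then (1 : ℝ) else 0) + cc a w * w i * w j)))

section facts

variable {a : ℝ} {w : Fin d → ℝ} (hb : ∑ i, w i ^ 2 < a ^ 2)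

lemma ss_neg (a : ℝ) (w : Fin d → ℝ) : ss a (-w) = ss a w := by simp [ss]

lemma cc_neg (a : ℝ) (w : Fin d → ℝ) : cc a (-w) = cc a w := by simp [cc, ss_neg]

include hb in
lemma ss_pos : 0 < ss a w := Real.sqrt_pos.2 (by linarith)

include hb in
lemma ss_sq : ss a w ^ 2 = a ^ 2 - ∑ i, w i ^ 2 := Real.sq_sqrt (by linarith)

end facts

lemma mulVec_zero' (a : ℝ) (w : Fin d → ℝ) (x : Fin (d + 1) → ℝ) :
    (bmat a w *ᵥ x) 0 = (a * x 0 - ∑ j, w j * x j.succ) / ss a w := by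
  simp only [bmat, Matrix.mulVec, dotProduct, Matrix.of_apply]
  rw [Fin.sum_univ_succ]
  simp only [Fin.cons_zero, Fin.cons_succ]
  rw [sub_div, Finset.sum_div, mul_div_assoc]
  congr 1
  · ring
  · rw [← Finset.sum_neg_distrib]
    apply Finset.sum_congr rfl
    intro j _
    ring

lemma mulVec_succ' (a : ℝ) (w : Fin d → ℝ) (x : Fin (d + 1) → ℝ) (i : Fin d) :
    (bmat a w *ᵥ x) i.succ
      = x i.succ + (cc a w * (∑ j, w j * x j.succ) - x 0 / ss a w) * w i := by
  simp only [bmat, Matrix.mulVec, dotProduct, Matrix.of_apply]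
  rw [Fin.sum_univ_succ]
  simp only [Fin.cons_zero, Fin.cons_succ]
  have : ∀ j, ((if i = j then (1:ℝ) else 0) + cc a w * w i * w j) * x j.succ
      = (if i = j then x j.succ else 0) + cc a w * w i * (w j * x j.succ) := by
    intro j; split <;> ring
  rw [Finset.sum_congr rfl fun j _ => this j, Finset.sum_add_distrib, ← Finset.mul_sum,
    Finset.sum_ite_eq Finset.univ i (fun j => x j.succ)]
  simp only [Finset.mem_univ, if_true]
  ring

section scalar
variable {a s t p b2 : ℝ} (hs : 0 < s) (has : 0 < a + s) (hb2 : b2 = a ^ 2 - s ^ 2)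

include hs has hb2

lemma scalar_inv0 :
    (a * ((a * t - p) / s) + (p + (1 / (s * (a + s)) * p - t / s) * b2)) / s = t := by
  subst hb2; field_simp; ring

lemma scalar_invi :
    (1 / (s * (a + s)) * p - t / s)
      + (1 / (s * (a + s)) * (p + (1 / (s * (a + s)) * p - t / s) * b2)
          + ((a * t - p) / s) / s) = 0 := by
  subst hb2; field_simp; ring

lemma scalar_form :
    ((a * t - p) / s) ^ 2
      - (2 * (1 / (s * (a + s)) * p - t / s) * p + (1 / (s * (a + s)) * p - t / s) ^ 2 * b2)
      = t ^ 2 := by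
  subst hb2; field_simp; ring

lemma scalar_inner :
    ((a * t - p) / s) * a + (p + (1 / (s * (a + s)) * p - t / s) * b2) = s * t := by
  subst hb2; field_simp; ring

end scalar

section sums
variable (w : Fin d → ℝ) (x : Fin (d + 1) → ℝ)

lemma sum_sq_add (k : ℝ) :
    ∑ i, (x i.succ + k * w i) ^ 2
      = (∑ i : Fin d, x i.succ ^ 2) + 2 * k * (∑ i, w i * x i.succ) + k ^ 2 * ∑ i, w i ^ 2 := by
  have h : ∀ i : Fin d, (x i.succ + k * w i) ^ 2
      = x i.succ ^ 2 + 2 * k * (w i * x i.succ) + k ^ 2 * w i ^ 2 := fun i => by ring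
  simp_rw [h, Finset.sum_add_distrib, ← Finset.mul_sum]

lemma sum_w_mul (k : ℝ) :
    ∑ j, w j * (x j.succ + k * w j)
      = (∑ j, w j * x j.succ) + k * ∑ j, w j ^ 2 := by
  have h : ∀ j : Fin d, w j * (x j.succ + k * w j)
      = w j * x j.succ + k * w j ^ 2 := fun j => by ring
  simp_rw [h, Finset.sum_add_distrib, ← Finset.mul_sum]

end sums

lemma det_bmat {a : ℝ} {w : Fin d → ℝ} (ha : 0 < a) (hb : ∑ i, w i ^ 2 < a ^ 2) :
    (bmat a w).det = 1 := by
  set s := ss a w with hs_def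
  have hs : 0 < s := ss_pos hb
  have hs2 : s ^ 2 = a ^ 2 - ∑ i, w i ^ 2 := ss_sq hb
  have has : 0 < a + s := by positivity
  have hcc : cc a w = 1 / (s * (a + s)) := by simp only [cc, hs_def]
  set U : Matrix (Fin (d + 1)) (Fin 2) ℝ :=
    Matrix.of fun k j => if j = 0 then (Fin.cons (α := fun _ => ℝ) 1 (fun _ => 0) k)
      else (Fin.cons (α := fun _ => ℝ) 0 w k) with hU
  set V : Matrix (Fin 2) (Fin (d + 1)) ℝ :=
    Matrix.of fun j l => if j = 0 then (Fin.cons (α := fun _ => ℝ) (a / s - 1) (fun i => -(w i) / s) l)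
      else (Fin.cons (α := fun _ => ℝ) (-1 / s) (fun i => cc a w * w i) l) with hV
  have hM : bmat a w = 1 + U * V := by
    ext k l
    rw [Matrix.add_apply, Matrix.mul_apply, Fin.sum_univ_two]
    induction k using Fin.cases with
    | zero =>
      induction l using Fin.cases with
      | zero => simp [bmat, hU, hV, Matrix.one_apply, hs_def]
      | succ j => simp [bmat, hU, hV, Matrix.one_apply, hs_def, Fin.succ_ne_zero, eq_comm]
    | succ i =>
      induction l using Fin.cases with
      | zero =>
        simp [bmat, hU, hV, Matrix.one_apply, hs_def, Fin.succ_ne_zero]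
        ring
      | succ j =>
        simp [bmat, hU, hV, Matrix.one_apply, Fin.succ_inj, hs_def]
        ring
  rw [hM, Matrix.det_one_add_mul_comm]
  have hVU : (1 : Matrix (Fin 2) (Fin 2) ℝ) + V * U
      = Matrix.of ![![a / s, -(∑ i, w i ^ 2) / s], ![-1 / s, 1 + cc a w * ∑ i, w i ^ 2]] := by
    ext j j'
    rw [Matrix.add_apply, Matrix.mul_apply, Fin.sum_univ_succ]
    fin_cases j <;> fin_cases j' <;>
      simp [hU, hV, Matrix.one_apply, Fin.succ_ne_zero, Finset.mul_sum, Finset.sum_div,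
        neg_div, div_eq_mul_inv]
    · rw [Finset.sum_mul]
      exact Finset.sum_congr rfl fun x _ => by ring
    · exact Finset.sum_congr rfl fun x _ => by ring
  rw [hVU, Matrix.det_fin_two_of, hcc]
  have hb2' : ∑ i, w i ^ 2 = a ^ 2 - s ^ 2 := by linarith
  rw [hb2']
  field_simp
  ring

section vec
variable {a : ℝ} {w : Fin d → ℝ}

lemma bmat_inverse (ha : 0 < a) (hb : ∑ i, w i ^ 2 < a ^ 2) (x : Fin (d + 1) → ℝ) :
    bmat a (-w) *ᵥ (bmat a w *ᵥ x) = x := by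
  have hs : 0 < ss a w := ss_pos hb
  have hs2 : ss a w ^ 2 = a ^ 2 - ∑ i, w i ^ 2 := ss_sq hb
  have has : 0 < a + ss a w := by linarith
  have hb2 : ∑ i, w i ^ 2 = a ^ 2 - ss a w ^ 2 := by linarith
  have hcc : cc a w = 1 / (ss a w * (a + ss a w)) := rfl
  have hsum : ∑ j, w j * (bmat a w *ᵥ x) j.succ
      = (∑ j, w j * x j.succ)
        + (cc a w * (∑ j, w j * x j.succ) - x 0 / ss a w) * ∑ j, w j ^ 2 := by
    simp_rw [mulVec_succ']
    exact sum_w_mul w x _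
  have hnegsum : ∑ j, (-w) j * (bmat a w *ᵥ x) j.succ
      = -∑ j, w j * (bmat a w *ᵥ x) j.succ := by
    simp [Finset.sum_neg_distrib]
  funext k
  induction k using Fin.cases with
  | zero =>
    rw [mulVec_zero', ss_neg, hnegsum, hsum, mulVec_zero', sub_neg_eq_add]
    rw [hcc]
    exact scalar_inv0 hs has hb2
  | succ i =>
    rw [mulVec_succ', ss_neg, cc_neg, hnegsum, hsum, mulVec_succ', mulVec_zero']
    have key : (cc a w * ((∑ j, w j * x j.succ)
          + (cc a w * (∑ j, w j * x j.succ) - x 0 / ss a w) * ∑ j, w j ^ 2)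
        + (a * x 0 - ∑ j, w j * x j.succ) / ss a w / ss a w)
        + (cc a w * (∑ j, w j * x j.succ) - x 0 / ss a w) = 0 := by
      rw [hcc]
      have := scalar_invi (t := x 0) (p := ∑ j, w j * x j.succ) hs has hb2
      linarith
    have hstuff : cc a w * -((∑ j, w j * x j.succ)
          + (cc a w * (∑ j, w j * x j.succ) - x 0 / ss a w) * ∑ j, w j ^ 2)
        - (a * x 0 - ∑ j, w j * x j.succ) / ss a w / ss a w
        = cc a w * (∑ j, w j * x j.succ) - x 0 / ss a w := by linarith
    rw [hstuff]
    simp only [Pi.neg_apply]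
    ring

lemma bmat_mem_cone (ha : 0 < a) (hb : ∑ i, w i ^ 2 < a ^ 2) (x : Fin (d + 1) → ℝ)
    (hx0 : 0 ≤ x 0) (hx : ∑ i : Fin d, x i.succ ^ 2 ≤ x 0 ^ 2) :
    0 ≤ (bmat a w *ᵥ x) 0 ∧ ∑ i : Fin d, (bmat a w *ᵥ x) i.succ ^ 2 ≤ (bmat a w *ᵥ x) 0 ^ 2 := by
  have hs : 0 < ss a w := ss_pos hb
  have hs2 : ss a w ^ 2 = a ^ 2 - ∑ i, w i ^ 2 := ss_sq hb
  have has : 0 < a + ss a w := by linarith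
  have hb2 : ∑ i, w i ^ 2 = a ^ 2 - ss a w ^ 2 := by linarith
  have hwnn : (0:ℝ) ≤ ∑ i, w i ^ 2 := Finset.sum_nonneg fun i _ => sq_nonneg _
  have hxnn : (0:ℝ) ≤ ∑ i : Fin d, x i.succ ^ 2 := Finset.sum_nonneg fun i _ => sq_nonneg _
  have hcs : (∑ j, w j * x j.succ) ^ 2 ≤ (∑ i, w i ^ 2) * ∑ i : Fin d, x i.succ ^ 2 :=
    Finset.sum_mul_sq_le_sq_mul_sq _ _ _
  have hple : ∑ j, w j * x j.succ ≤ a * x 0 := by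
    nlinarith [mul_nonneg ha.le hx0, sq_nonneg (a * x 0 - ∑ j, w j * x j.succ),
      sq_nonneg (a * x 0 + ∑ j, w j * x j.succ)]
  constructor
  · rw [mulVec_zero']
    exact div_nonneg (by linarith) hs.le
  · have hform := scalar_form (a := a) (s := ss a w) (t := x 0)
      (p := ∑ j, w j * x j.succ) hs has hb2
    have hexp : ∑ i : Fin d, (bmat a w *ᵥ x) i.succ ^ 2
        = (∑ i : Fin d, x i.succ ^ 2)
          + 2 * (cc a w * (∑ j, w j * x j.succ) - x 0 / ss a w) * (∑ j, w j * x j.succ)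
          + (cc a w * (∑ j, w j * x j.succ) - x 0 / ss a w) ^ 2 * ∑ i, w i ^ 2 := by
      simp_rw [mulVec_succ']
      exact sum_sq_add w x _
    rw [hexp, mulVec_zero',
      show cc a w = 1 / (ss a w * (a + ss a w)) from rfl]
    linarith [hform, hx]

lemma bmat_inner (ha : 0 < a) (hb : ∑ i, w i ^ 2 < a ^ 2) (x : Fin (d + 1) → ℝ) :
    (bmat a w *ᵥ x) 0 * a + ∑ j, (bmat a w *ᵥ x) j.succ * w j = ss a w * x 0 := by
  have hs : 0 < ss a w := ss_pos hb
  have hs2 : ss a w ^ 2 = a ^ 2 - ∑ i, w i ^ 2 := ss_sq hb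
  have has : 0 < a + ss a w := by linarith
  have hb2 : ∑ i, w i ^ 2 = a ^ 2 - ss a w ^ 2 := by linarith
  have hsum : ∑ j, (bmat a w *ᵥ x) j.succ * w j
      = (∑ j, w j * x j.succ)
        + (cc a w * (∑ j, w j * x j.succ) - x 0 / ss a w) * ∑ j, w j ^ 2 := by
    simp_rw [mulVec_succ']
    rw [show ∀ (g : Fin d → ℝ), ∑ j, g j * w j = ∑ j, w j * g j from
      fun g => Finset.sum_congr rfl fun j _ => mul_comm _ _]
    exact sum_w_mul w x _
  rw [hsum, mulVec_zero', show cc a w = 1 / (ss a w * (a + ss a w)) from rfl]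
  exact scalar_inner hs has hb2

end vec

lemma volume_cone (d : ℕ) {h : ℝ} (hh : 0 ≤ h) :
    volume {x : EuclideanSpace ℝ (Fin (d + 1)) |
        (0 ≤ x 0 ∧ ∑ i : Fin d, x i.succ ^ 2 ≤ x 0 ^ 2) ∧ x 0 ≤ h}
      = ENNReal.ofReal (h ^ (d + 1) / (d + 1))
          * volume (Metric.ball (0 : EuclideanSpace ℝ (Fin d)) 1) := by
  set B : Set (ℝ × (Fin d → ℝ)) :=
    {q | (0 ≤ q.1 ∧ ∑ i : Fin d, q.2 i ^ 2 ≤ q.1 ^ 2) ∧ q.1 ≤ h} with hB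
  have hBmeas : MeasurableSet B := by
    apply MeasurableSet.inter
    · apply MeasurableSet.inter
      · exact measurableSet_le measurable_const measurable_fst
      · exact measurableSet_le
          (Finset.measurable_sum _ fun i _ => ((measurable_pi_apply i).comp measurable_snd).pow_const 2)
          (measurable_fst.pow_const 2)
    · exact measurableSet_le measurable_fst measurable_const
  have e2 := MeasureTheory.volume_preserving_piFinSuccAbove (fun _ : Fin (d+1) => ℝ) 0
  have key : volume {x : EuclideanSpace ℝ (Fin (d + 1)) |
        (0 ≤ x 0 ∧ ∑ i : Fin d, x i.succ ^ 2 ≤ x 0 ^ 2) ∧ x 0 ≤ h}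
      = (volume : Measure (ℝ × (Fin d → ℝ))) B := by
    rw [← e2.measure_preimage hBmeas.nullMeasurableSet]
    rw [← (EuclideanSpace.volume_preserving_symm_measurableEquiv_toLp (Fin (d+1))).measure_preimage
      (hBmeas.preimage (MeasurableEquiv.piFinSuccAbove _ 0).measurable).nullMeasurableSet]
    congr 1
  rw [key, show (volume : Measure (ℝ × (Fin d → ℝ))) = (volume : Measure ℝ).prod volume from rfl,
    Measure.prod_apply hBmeas]
  have slice : ∀ t : ℝ, (volume : Measure (Fin d → ℝ)) (Prod.mk t ⁻¹' B)
      = Set.indicator (Set.Icc 0 h)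
          (fun t => ENNReal.ofReal (t ^ d) * volume (Metric.ball (0 : EuclideanSpace ℝ (Fin d)) 1)) t := by
    intro t
    by_cases ht : t ∈ Set.Icc 0 h
    · rw [Set.indicator_of_mem ht]
      have : Prod.mk t ⁻¹' B = {z : Fin d → ℝ | ∑ i, z i ^ 2 ≤ t ^ 2} := by
        ext z; simp only [B, Set.mem_preimage, Set.mem_setOf_eq]
        exact ⟨fun h' => h'.1.2, fun h' => ⟨⟨ht.1, h'⟩, ht.2⟩⟩
      rw [this]
      have := (EuclideanSpace.volume_preserving_symm_measurableEquiv_toLp (Fin d)).measure_preimage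
        (μa := volume) (s := {z : Fin d → ℝ | ∑ i, z i ^ 2 ≤ t ^ 2})
        ((measurableSet_le (Finset.measurable_sum _ fun i _ => (measurable_pi_apply i).pow_const 2)
          measurable_const)).nullMeasurableSet
      rw [← this]
      have hball : (MeasurableEquiv.toLp 2 (Fin d → ℝ)).symm ⁻¹' {z : Fin d → ℝ | ∑ i, z i ^ 2 ≤ t ^ 2}
          = Metric.closedBall (0 : EuclideanSpace ℝ (Fin d)) t := by
        ext z
        have hnn : (0:ℝ) ≤ ∑ i, z i ^ 2 := Finset.sum_nonneg fun i _ => sq_nonneg _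
        show (∑ i, z i ^ 2 ≤ t ^ 2) ↔ z ∈ Metric.closedBall 0 t
        rw [Metric.mem_closedBall, dist_zero_right, EuclideanSpace.norm_eq]
        constructor
        · intro hz
          calc Real.sqrt (∑ i, ‖z i‖ ^ 2) = Real.sqrt (∑ i, z i ^ 2) := by
                simp [Real.norm_eq_abs, sq_abs]
            _ ≤ Real.sqrt (t ^ 2) := Real.sqrt_le_sqrt hz
            _ = t := Real.sqrt_sq ht.1
        · intro hz
          have h1 : Real.sqrt (∑ i, z i ^ 2) ≤ t := by
            simpa [Real.norm_eq_abs, sq_abs] using hz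
          calc ∑ i, z i ^ 2 = Real.sqrt (∑ i, z i ^ 2) ^ 2 := (Real.sq_sqrt hnn).symm
            _ ≤ t ^ 2 := pow_le_pow_left₀ (Real.sqrt_nonneg _) h1 2
      rw [hball, Measure.addHaar_closedBall _ _ ht.1, finrank_euclideanSpace_fin]
    · rw [Set.indicator_of_notMem ht]
      have : Prod.mk t ⁻¹' B = ∅ := by
        ext z
        simp only [B, Set.mem_preimage, Set.mem_setOf_eq, Set.mem_empty_iff_false, iff_false]
        rintro ⟨⟨h1, -⟩, h2⟩
        exact ht ⟨h1, h2⟩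
      simp [this]
  calc ∫⁻ t, (volume : Measure (Fin d → ℝ)) (Prod.mk t ⁻¹' B)
      = ∫⁻ t, Set.indicator (Set.Icc 0 h)
          (fun t => ENNReal.ofReal (t ^ d) * volume (Metric.ball (0 : EuclideanSpace ℝ (Fin d)) 1)) t := by
        exact lintegral_congr slice
    _ = ∫⁻ t in Set.Icc 0 h, ENNReal.ofReal (t ^ d) * volume (Metric.ball (0 : EuclideanSpace ℝ (Fin d)) 1) := by
        rw [lintegral_indicator measurableSet_Icc]
    _ = (∫⁻ t in Set.Icc 0 h, ENNReal.ofReal (t ^ d)) * volume (Metric.ball (0 : EuclideanSpace ℝ (Fin d)) 1) := by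
        rw [lintegral_mul_const]
        exact (measurable_id.pow_const d).ennreal_ofReal
    _ = ENNReal.ofReal (h ^ (d + 1) / (d + 1)) * volume (Metric.ball (0 : EuclideanSpace ℝ (Fin d)) 1) := by
        congr 1
        rw [← MeasureTheory.ofReal_integral_eq_lintegral_ofReal]
        · congr 1
          rw [MeasureTheory.integral_Icc_eq_integral_Ioc, ← intervalIntegral.integral_of_le hh,
            integral_pow]
          push_cast
          ring
        · exact (continuous_pow d).integrableOn_Icc
        · filter_upwards [ae_restrict_mem measurableSet_Icc] with t ht
          exact pow_nonneg ht.1 d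

lemma interior_facts {d : ℕ} {C : Set (EuclideanSpace ℝ (Fin (d + 1)))}
    (hCdef : C = {z : EuclideanSpace ℝ (Fin (d + 1)) |
      0 ≤ z 0 ∧ ∑ i : Fin d, (z i.succ) ^ 2 ≤ (z 0) ^ 2})
    {y : EuclideanSpace ℝ (Fin (d + 1))} (hy : y ∈ interior C) :
    0 < y 0 ∧ ∑ i : Fin d, (y i.succ) ^ 2 < (y 0) ^ 2 := by
  rw [mem_interior_iff_mem_nhds, Metric.mem_nhds_iff] at hy
  obtain ⟨ε, hε, hball⟩ := hy
  set z : EuclideanSpace ℝ (Fin (d + 1)) := y - (ε / 2) • EuclideanSpace.single 0 1 with hz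
  have hzmem : z ∈ C := by
    apply hball
    rw [Metric.mem_ball, dist_eq_norm]
    have h1 : z - y = -((ε / 2) • EuclideanSpace.single (0 : Fin (d+1)) (1:ℝ)) := by
      rw [hz]; abel
    rw [h1, norm_neg, norm_smul, EuclideanSpace.norm_single]
    simp only [Real.norm_eq_abs, norm_one, mul_one]
    rw [abs_of_pos (by linarith)]
    linarith
  have hz0 : z 0 = y 0 - ε / 2 := by
    simp [hz, EuclideanSpace.single_apply]
  have hzi : ∀ i : Fin d, z i.succ = y i.succ := by
    intro i
    simp [hz, EuclideanSpace.single_apply, Fin.succ_ne_zero]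
  rw [hCdef] at hzmem
  obtain ⟨h1, h2⟩ := hzmem
  rw [hz0] at h1
  have h2' : ∑ i : Fin d, (y i.succ) ^ 2 ≤ (y 0 - ε / 2) ^ 2 := by
    calc ∑ i : Fin d, (y i.succ) ^ 2 = ∑ i : Fin d, (z i.succ) ^ 2 :=
          Finset.sum_congr rfl fun i _ => by rw [hzi]
      _ ≤ (z 0) ^ 2 := h2
      _ = (y 0 - ε / 2) ^ 2 := by rw [hz0]
  constructor
  · linarith
  · nlinarith [h1, hε, h2']

end LightCone

/-- for the light cone `C = {y : y₀ ≥ 0, y₀² ≥ y₁² + ⋯ + y_d²}`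
in `ℝ^{d+1}` and `y ∈ int C`, the volume of the truncation `{x ∈ C : ⟨x,y⟩ ≤ 1}`
equals `β_d / ((d+1)‖y‖_{1,d}^{d+1})`, where `β_d` is the volume of the unit
`d`-ball and `‖y‖_{1,d} = √(y₀² - y₁² - ⋯ - y_d²)`. -/
theorem volume_truncated_light_cone
    (d : ℕ) (hd : 1 ≤ d)
    (C : Set (EuclideanSpace ℝ (Fin (d + 1))))
    (hCdef : C = {z : EuclideanSpace ℝ (Fin (d + 1)) |
      0 ≤ z 0 ∧ ∑ i : Fin d, (z i.succ) ^ 2 ≤ (z 0) ^ 2})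
    (y : EuclideanSpace ℝ (Fin (d + 1))) (hy : y ∈ interior C) :
    volume {x ∈ C | ⟪x, y⟫ ≤ 1}
      = ENNReal.ofReal
          ((volume (Metric.ball (0 : EuclideanSpace ℝ (Fin d)) 1)).toReal
            / ((d + 1) *
              Real.sqrt ((y 0) ^ 2 - ∑ i : Fin d, (y i.succ) ^ 2) ^ (d + 1))) := by
  classical
  obtain ⟨ha, hb⟩ := LightCone.interior_facts hCdef hy
  set w : Fin d → ℝ := fun i => y i.succ with hw
  have hb' : ∑ i, w i ^ 2 < (y 0) ^ 2 := hb
  set s := LightCone.ss (y 0) w with hs_def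
  have hs : 0 < s := LightCone.ss_pos hb'
  have hh : (0:ℝ) ≤ 1 / s := by positivity
  set f : EuclideanSpace ℝ (Fin (d + 1)) →ₗ[ℝ] EuclideanSpace ℝ (Fin (d + 1)) :=
    Matrix.toEuclideanLin (LightCone.bmat (y 0) w) with hf
  have hfapp : ∀ (x : EuclideanSpace ℝ (Fin (d + 1))) (k : Fin (d + 1)),
      f x k = (LightCone.bmat (y 0) w *ᵥ x) k := fun x k => rfl
  have hdet : LinearMap.det f = 1 := by
    rw [hf, Matrix.toEuclideanLin_eq_toLin, LinearMap.det_toLin]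
    exact LightCone.det_bmat ha hb'
  have hinner : ∀ u : EuclideanSpace ℝ (Fin (d + 1)),
      ⟪u, y⟫ = u 0 * y 0 + ∑ j, u j.succ * w j := by
    intro u
    rw [PiLp.inner_apply]
    simp only [RCLike.inner_apply, conj_trivial]
    rw [Fin.sum_univ_succ]
    rw [mul_comm (y 0)]
    exact congrArg _ (Finset.sum_congr rfl fun j _ => mul_comm _ _)
  have hbneg : ∑ i, (-w) i ^ 2 < (y 0) ^ 2 := by simpa using hb'
  have himg : f '' {x : EuclideanSpace ℝ (Fin (d + 1)) |
        (0 ≤ x 0 ∧ ∑ i : Fin d, x i.succ ^ 2 ≤ x 0 ^ 2) ∧ x 0 ≤ 1 / s}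
      = {x ∈ C | ⟪x, y⟫ ≤ 1} := by
    ext z
    constructor
    · rintro ⟨x, ⟨⟨hx0, hx1⟩, hx2⟩, rfl⟩
      have hc := LightCone.bmat_mem_cone ha hb' x hx0 hx1
      constructor
      · rw [hCdef]
        exact ⟨by rw [hfapp]; exact hc.1, by simp only [hfapp]; exact hc.2⟩
      · rw [hinner]
        have hi := LightCone.bmat_inner ha hb' (x : Fin (d + 1) → ℝ)
        simp only [hfapp]
        rw [hi]
        calc s * x 0 ≤ s * (1 / s) := by
              apply mul_le_mul_of_nonneg_left hx2 hs.le
          _ = 1 := by field_simp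
    · rintro ⟨hzC, hz1⟩
      rw [hCdef] at hzC
      obtain ⟨hz0, hzq⟩ := hzC
      refine ⟨WithLp.toLp 2 (LightCone.bmat (y 0) (-w) *ᵥ z : Fin (d + 1) → ℝ), ⟨⟨?_, ?_⟩, ?_⟩, ?_⟩
      · exact (LightCone.bmat_mem_cone ha hbneg z hz0 hzq).1
      · exact (LightCone.bmat_mem_cone ha hbneg z hz0 hzq).2
      · -- x 0 ≤ 1 / s
        have hfx : f (WithLp.toLp 2 (LightCone.bmat (y 0) (-w) *ᵥ z : Fin (d + 1) → ℝ)) = z := by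
          ext k
          rw [hfapp, WithLp.ofLp_toLp]
          have := LightCone.bmat_inverse (w := -w) ha hbneg (z : Fin (d + 1) → ℝ)
          rw [neg_neg] at this
          rw [this]
        have hi := LightCone.bmat_inner ha hb'
          ((LightCone.bmat (y 0) (-w) *ᵥ z : Fin (d + 1) → ℝ) : Fin (d + 1) → ℝ)
        have h2 : s * (LightCone.bmat (y 0) (-w) *ᵥ z) 0 ≤ 1 := by
          rw [← hi]
          rw [hinner z] at hz1
          calc (LightCone.bmat (y 0) w *ᵥ (LightCone.bmat (y 0) (-w) *ᵥ z)) 0 * y 0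
                + ∑ j, (LightCone.bmat (y 0) w *ᵥ (LightCone.bmat (y 0) (-w) *ᵥ z)) j.succ * w j
              = z 0 * y 0 + ∑ j, z j.succ * w j := by
                have hid := LightCone.bmat_inverse (w := -w) ha hbneg (z : Fin (d + 1) → ℝ)
                rw [neg_neg] at hid
                rw [hid]
            _ ≤ 1 := hz1
        rw [le_div_iff₀ hs, mul_comm]
        exact h2
      · ext k
        rw [hfapp, WithLp.ofLp_toLp]
        have := LightCone.bmat_inverse (w := -w) ha hbneg (z : Fin (d + 1) → ℝ)
        rw [neg_neg] at this
        rw [this]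
  rw [← himg, Measure.addHaar_image_linearMap, hdet]
  simp only [abs_one, ENNReal.ofReal_one, one_mul]
  rw [LightCone.volume_cone d hh]
  have hBfin : volume (Metric.ball (0 : EuclideanSpace ℝ (Fin d)) 1) ≠ ⊤ :=
    measure_ball_lt_top.ne
  rw [← ENNReal.ofReal_toReal hBfin, ← ENNReal.ofReal_mul (by positivity)]
  apply congrArg ENNReal.ofReal
  have hsq : Real.sqrt ((y 0) ^ 2 - ∑ i : Fin d, (y i.succ) ^ 2) = s := by
    rw [hs_def, LightCone.ss]
  rw [hsq, div_pow, one_pow, div_div, div_mul_eq_mul_div, one_mul,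
    mul_comm (s ^ (d + 1))]
  rw [ENNReal.toReal_ofReal ENNReal.toReal_nonneg]
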